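/- Suppose S = ⋂_{i=1}^m argmin f_i ≠ ∅. Then the set of classical cycles Z equals {(z,…,z) : z ∈ S}, i.e., every cycle is a constant tuple with entries in the common minimizer set. -/

import Mathlib

open scoped RealInnerProductSpace

variable {X : Type*} [NormedAddCommGroup X] [InnerProductSpace ℝ X] [CompleteSpace X]
variable {m : ℕ} [NeZero m]

/-- The convex subdifferential. -/
def SubdiffAt (f : X → EReal) (x : X) : Set X :=
  {u | ∀ y, f x + ((⟪u, y - x⟫ : ℝ) : EReal) ≤ f y}

/-- A proper function: never `⊥` and not identically `⊤`. -/
def ProperE (f : X → EReal) : Prop := (∀ x, f x ≠ ⊥) ∧ ∃ x, f x ≠ ⊤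

/-- Convexity for extended-real-valued functions. -/
def EConvex (f : X → EReal) : Prop :=
  ∀ x y : X, ∀ a b : ℝ, 0 ≤ a → 0 ≤ b → a + b = 1 →
    f (a • x + b • y) ≤ (a : EReal) * f x + (b : EReal) * f y

/-- Membership in `Γ₀(X)`. -/
def Gamma0 (f : X → EReal) : Prop := ProperE f ∧ LowerSemicontinuous f ∧ EConvex f

/-- `P` is the proximal mapping `(Id + ∂f)⁻¹` of `f`: `p = P x ⟺ x − p ∈ ∂f(p)`. -/
def IsProxOf (P : X → X) (f : X → EReal) : Prop :=
  ∀ x p : X, p = P x ↔ x - p ∈ SubdiffAt f p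

/-- The cyclic composition `P_i ∘ ⋯ ∘ P_1 ∘ P_m ∘ ⋯ ∘ P_{i+1}` (indices mod `m`),
applying first `P_{i+1}` and ending with `P_i`. -/
def cyc (P : Fin m → X → X) (i : Fin m) : X → X :=
  fun x => (List.range m).foldl (fun y k => P (i + 1 + Fin.ofNat m k) y) x

/-- The fixed point set `F_i` of the cyclic composition ending at index `i`. -/
def FixSet (P : Fin m → X → X) (i : Fin m) : Set X := {x | cyc P i x = x}

/-- The set of minimizers of `f`. -/
def argminSet (f : X → EReal) : Set X := {x | ∀ y, f x ≤ f y}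

/-- The set of classical cycles. -/
def cycleSet (P : Fin m → X → X) : Set (Fin m → X) :=
  {z | ∀ i, z i = P i (z (i - 1))}

lemma zero_mem_subdiff_iff (f : X → EReal) (x : X) :
    (0:X) ∈ SubdiffAt f x ↔ ∀ y, f x ≤ f y := by
  simp [SubdiffAt]

lemma subdiff_ne_top {f : X → EReal} (hf : ProperE f) {p u : X}
    (hu : u ∈ SubdiffAt f p) : f p ≠ ⊤ := by
  intro htop
  obtain ⟨y, hy⟩ := hf.2
  have := hu y
  rw [htop] at this
  rw [EReal.top_add_of_ne_bot (by simp)] at this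
  exact hy (top_le_iff.mp this)

lemma subdiff_mono {f : X → EReal} (hf : ProperE f) {p q u v : X}
    (hu : u ∈ SubdiffAt f p) (hv : v ∈ SubdiffAt f q) :
    (0:ℝ) ≤ ⟪u - v, p - q⟫ := by
  have hp := EReal.coe_toReal (subdiff_ne_top hf hu) (hf.1 p)
  have hq := EReal.coe_toReal (subdiff_ne_top hf hv) (hf.1 q)
  have h1 := hu q
  have h2 := hv p
  rw [← hp, ← hq] at h1 h2
  rw [← EReal.coe_add, EReal.coe_le_coe_iff] at h1 h2
  have e1 : ⟪u, q - p⟫ = -⟪u, p - q⟫ := by rw [← inner_neg_right, neg_sub]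
  rw [inner_sub_left]
  linarith [e1 ▸ h1, h2]

open Fin.CommRing in
/-- If `S = ⋂ argmin f_i ≠ ∅`, then the set of classical cycles equals the set of
constant tuples with entries in `S`. -/
theorem stmt_17 (f : Fin m → X → EReal) (hf : ∀ i, Gamma0 (f i))
    (P : Fin m → X → X) (hP : ∀ i, IsProxOf (P i) (f i))
    (hS : (⋂ i, argminSet (f i)).Nonempty) :
    cycleSet P = (fun w : X => (fun _ : Fin m => w)) '' (⋂ i, argminSet (f i)) := by
  have hfix : ∀ v ∈ ⋂ i, argminSet (f i), ∀ i, P i v = v := by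
    intro v hv i
    have h0 : (0:X) ∈ SubdiffAt (f i) v :=
      (zero_mem_subdiff_iff _ _).mpr (Set.mem_iInter.mp hv i)
    exact ((hP i v v).mpr (by simpa using h0)).symm
  obtain ⟨w, hw⟩ := hS
  ext z
  constructor
  · intro hz
    have hsub : ∀ i, (z (i-1) - z i) ∈ SubdiffAt (f i) (z i) := fun i => (hP i _ _).mp (hz i)
    have h0w : ∀ i, (0:X) ∈ SubdiffAt (f i) w := fun i =>
      (zero_mem_subdiff_iff _ _).mpr (Set.mem_iInter.mp hw i)
    have hfirm : ∀ i, ‖z i - w‖^2 ≤ ⟪z (i-1) - w, z i - w⟫ := by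
      intro i
      have h2 : (0:ℝ) ≤ ⟪z (i-1) - z i, z i - w⟫ := by
        simpa using subdiff_mono (hf i).1 (hsub i) (h0w i)
      have e : ⟪z (i-1) - w, z i - w⟫
          = ⟪z (i-1) - z i, z i - w⟫ + ⟪z i - w, z i - w⟫ := by
        rw [← inner_add_left]; congr 1; abel
      rw [e, real_inner_self_eq_norm_sq]
      linarith
    have hle : ∀ i, ‖z i - w‖ ≤ ‖z (i-1) - w‖ := by
      intro i
      nlinarith [hfirm i, real_inner_le_norm (z (i-1) - w) (z i - w),
        norm_nonneg (z i - w), norm_nonneg (z (i-1) - w)]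
    have hchain : ∀ (k : ℕ) (i : Fin m), ‖z i - w‖ ≤ ‖z (i - (k : Fin m)) - w‖ := by
      intro k
      induction k with
      | zero => simp
      | succ n ih =>
        intro i
        calc ‖z i - w‖ ≤ ‖z (i-1) - w‖ := hle i
          _ ≤ ‖z (i - 1 - (n : Fin m)) - w‖ := ih (i-1)
          _ = ‖z (i - ((n+1 : ℕ) : Fin m)) - w‖ := by
              congr 2; push_cast; ring
    have hmneg : ((m-1 : ℕ) : Fin m) = -1 := by
      have hm : 1 ≤ m := Nat.one_le_iff_ne_zero.mpr (NeZero.ne m)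
      have : ((m-1 : ℕ) : Fin m) + 1 = 0 := by
        rw [← Nat.cast_one (R := Fin m), ← Nat.cast_add, Nat.sub_add_cancel hm,
          Fin.natCast_self]
      linear_combination this
    have hnorm : ∀ i : Fin m, ‖z (i-1) - w‖ = ‖z i - w‖ := by
      intro i
      refine le_antisymm ?_ (hle i)
      have := hchain (m-1) (i-1)
      rw [hmneg] at this
      simpa using this
    have heq : ∀ i : Fin m, z (i-1) = z i := by
      intro i
      have h1 := hfirm i
      have h2 := hnorm i
      have h2' : ‖z (i-1) - w‖^2 = ‖z i - w‖^2 := by rw [h2]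
      have h3 : ‖(z (i-1) - w) - (z i - w)‖^2 ≤ 0 := by
        rw [norm_sub_sq_real]; linarith
      have h4 : z (i-1) - w - (z i - w) = 0 := by
        rw [← norm_eq_zero]; nlinarith [norm_nonneg (z (i-1) - w - (z i - w))]
      exact sub_left_inj.mp (sub_eq_zero.mp h4)
    have hconstk : ∀ k : ℕ, z ((k : Fin m)) = z 0 := by
      intro k
      induction k with
      | zero => simp
      | succ n ih =>
        have h := heq ((n+1 : ℕ) : Fin m)
        have e : ((n+1 : ℕ) : Fin m) - 1 = ((n : ℕ) : Fin m) := by push_cast; ring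
        rw [e] at h
        rw [← h, ih]
    have hconst : ∀ i : Fin m, z i = z 0 := by
      intro i
      have := hconstk i.val
      rwa [Fin.cast_val_eq_self] at this
    have hz0 : z 0 ∈ ⋂ i, argminSet (f i) := by
      refine Set.mem_iInter.mpr fun i => ?_
      have hc : z 0 = P i (z 0) := by
        have := hz i
        rwa [hconst i, hconst (i-1)] at this
      have := (hP i (z 0) (z 0)).mp hc
      simp only [sub_self] at this
      exact (zero_mem_subdiff_iff _ _).mp this
    exact ⟨z 0, hz0, by funext i; exact (hconst i).symm⟩
  · rintro ⟨v, hv, rfl⟩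
    intro i
    exact (hfix v hv i).symm
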